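/- Let X_t be an irreducible continuous-time Markov chain on a finite set V with generator L. Fix V_0 ⊂ V and a positive function g : V_0 → (0,∞), and let u be the harmonic extension of g: Lu = 0 on V∖V_0, u = g on V_0. Then for every probability measure μ on V, ∫_V (Lu)/u dμ = ∫_{V_0} (L_{V_0} g)/g dμ, where L_{V_0} is the generator of the trace process of X_t on V_0. -/
import Mathlib


open Finset Filter Topology

noncomputable section

/-- Generator of a continuous-time Markov chain with jump rates `R`. -/
def gen {V : Type*} [Fintype V] (R : V → V → ℝ) (f : V → ℝ) (x : V) : ℝ :=
  ∑ y, R x y * (f y - f x)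

/-- Generator of a chain restricted to the subset `W` (e.g. a trace process). -/
def genOn {V : Type*} [Fintype V] [DecidableEq V] (W : Finset V) (R : V → V → ℝ)
    (f : V → ℝ) (x : V) : ℝ :=
  ∑ y ∈ W, R x y * (f y - f x)

/-- Detailed balance (reversibility) of `π` for the rates `R`. -/
def Reversible {V : Type*} (R : V → V → ℝ) (π : V → ℝ) : Prop :=
  ∀ x y, π x * R x y = π y * R y x

/-- Stationarity of `π` for the rates `R`. -/
def Stationary {V : Type*} [Fintype V] (R : V → V → ℝ) (π : V → ℝ) : Prop :=
  ∀ y, ∑ x, π x * R x y = π y * ∑ z, R y z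

/-- Irreducibility of the rates `R`. -/
def Irred {V : Type*} (R : V → V → ℝ) : Prop :=
  ∀ x y : V, Relation.ReflTransGen (fun a b => 0 < R a b) x y

/-- `h` is the equilibrium potential `h(x) = P_x[H_A < H_B]` : it equals `1` on `A`,
`0` on `B` and is harmonic elsewhere. -/
def IsEqPotential {V : Type*} [Fintype V] (R : V → V → ℝ) (A B : Finset V)
    (h : V → ℝ) : Prop :=
  (∀ x ∈ A, h x = 1) ∧ (∀ x ∈ B, h x = 0) ∧ ∀ x, x ∉ A → x ∉ B → gen R h x = 0

/-- The capacity `Cap(A,B) = ∑_{x∈A} π(x) λ(x) P_x[H_B < H_A⁺]`, expressed through the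
equilibrium potential `h = h_{A,B}` as `-∑_{x∈A} π(x) (L h)(x)`. -/
def capFor {V : Type*} [Fintype V] (R : V → V → ℝ) (π : V → ℝ) (A : Finset V)
    (h : V → ℝ) : ℝ :=
  ∑ x ∈ A, π x * (-(gen R h x))

lemma gen_sub {V : Type*} [Fintype V] (R : V → V → ℝ) (f h : V → ℝ) (x : V) :
    gen R (fun z => f z - h z) x = gen R f x - gen R h x := by
  simp only [gen, ← Finset.sum_sub_distrib]
  exact Finset.sum_congr rfl fun y _ => by ring

lemma gen_neg {V : Type*} [Fintype V] (R : V → V → ℝ) (f : V → ℝ) (x : V) :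
    gen R (fun z => -f z) x = -gen R f x := by
  simp only [gen, ← Finset.sum_neg_distrib]
  exact Finset.sum_congr rfl fun y _ => by ring

lemma stmt5_harmonic_nonpos {V : Type*} [Fintype V] (R : V → V → ℝ)
    (hR : ∀ x y, 0 ≤ R x y) (hirr : Irred R)
    (V₀ : Finset V) (hV₀ne : V₀.Nonempty)
    (f : V → ℝ) (hf : ∀ x, x ∉ V₀ → gen R f x = 0)
    (hf0 : ∀ x ∈ V₀, f x ≤ 0) : ∀ x, f x ≤ 0 := by
  obtain ⟨v, hv⟩ := hV₀ne
  obtain ⟨x₀, -, hx₀⟩ := Finset.exists_max_image Finset.univ f ⟨v, Finset.mem_univ v⟩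
  set M := f x₀ with hM
  have prop : ∀ a, a ∉ V₀ → f a = M → ∀ b, 0 < R a b → f b = M := by
    intro a ha hfa b hb
    have h0 := hf a ha
    simp only [gen] at h0
    have hle : ∀ y ∈ Finset.univ, R a y * (f y - f a) ≤ 0 := by
      intro y _
      have h1 := hx₀ y (Finset.mem_univ y)
      have h2 := hR a y
      nlinarith [hfa]
    have hz := (Finset.sum_eq_zero_iff_of_nonpos hle).mp h0 b (Finset.mem_univ b)
    rcases mul_eq_zero.mp hz with h | h
    · exact absurd h (ne_of_gt hb)
    · have : f b = f a := by linarith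
      rw [this, hfa]
  have key : ∀ a, Relation.ReflTransGen (fun p q => 0 < R p q) a v →
      f a = M → ∃ w ∈ V₀, f w = M := by
    intro a h
    induction h using Relation.ReflTransGen.head_induction_on with
    | refl => exact fun hMv => ⟨v, hv, hMv⟩
    | @head a c hac hcv ih =>
      intro hfa
      by_cases ha : a ∈ V₀
      · exact ⟨a, ha, hfa⟩
      · exact ih (prop a ha hfa c hac)
  obtain ⟨w, hw, hwM⟩ := key x₀ (hirr x₀ v) rfl
  intro x
  have := hx₀ x (Finset.mem_univ x)
  have := hf0 w hw
  linarith [hwM]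

lemma stmt5_harmonic_zero {V : Type*} [Fintype V] (R : V → V → ℝ)
    (hR : ∀ x y, 0 ≤ R x y) (hirr : Irred R)
    (V₀ : Finset V) (hV₀ne : V₀.Nonempty)
    (f : V → ℝ) (hf : ∀ x, x ∉ V₀ → gen R f x = 0)
    (hf0 : ∀ x ∈ V₀, f x = 0) : ∀ x, f x = 0 := by
  intro x
  have h1 := stmt5_harmonic_nonpos R hR hirr V₀ hV₀ne f hf
    (fun y hy => le_of_eq (hf0 y hy)) x
  have h2 := stmt5_harmonic_nonpos R hR hirr V₀ hV₀ne (fun z => -f z)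
    (fun y hy => by rw [gen_neg, hf y hy, neg_zero])
    (fun y hy => by simp [hf0 y hy]) x
  linarith


/-- let `u` be the positive harmonic extension of `g : V₀ → (0,∞)`
(`Lu = 0` off `V₀`, `u = g` on `V₀`).  Then for every probability measure `μ` on `V`,
`∫_V (Lu)/u dμ = ∫_{V₀} (L_{V₀} g)/g dμ`, where `L_{V₀}` is the generator of the trace
process on `V₀`, whose rates are expressed through the harmonic measure `hm`. -/
theorem stmt5 {V : Type*} [Fintype V] [DecidableEq V]
    (R : V → V → ℝ) (hR : ∀ x y, 0 ≤ R x y) (hRdiag : ∀ x, R x x = 0)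
    (hirr : Irred R)
    (V₀ : Finset V) (hV₀ne : V₀.Nonempty)
    (hm : V → V → ℝ)
    (hm0 : ∀ x ∈ V₀, ∀ y, hm x y = if x = y then 1 else 0)
    (hmh : ∀ x, x ∉ V₀ → ∀ y, gen R (fun z => hm z y) x = 0)
    (RV₀ : V → V → ℝ)
    (hRV₀ : ∀ x ∈ V₀, ∀ y ∈ V₀, x ≠ y → RV₀ x y = R x y + ∑ z ∈ V₀ᶜ, R x z * hm z y)
    (hRV₀diag : ∀ x, RV₀ x x = 0)
    (g u : V → ℝ) (hgpos : ∀ x ∈ V₀, 0 < g x)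
    (hupos : ∀ x, 0 < u x)
    (hu0 : ∀ x ∈ V₀, u x = g x)
    (huh : ∀ x, x ∉ V₀ → gen R u x = 0)
    (μ : V → ℝ) (hμ : ∀ x, 0 ≤ μ x) (hμ1 : ∑ x, μ x = 1) :
    ∑ x, μ x * (gen R u x / u x) = ∑ x ∈ V₀, μ x * (genOn V₀ RV₀ g x / g x) := by
  -- harmonic extension via hm of any boundary data is harmonic off V₀
  have hcomb : ∀ (c : V → ℝ) (x : V), x ∉ V₀ →
      gen R (fun z => ∑ y ∈ V₀, hm z y * c y) x = 0 := by
    intro c x hx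
    simp only [gen]
    have hterm : ∀ z, R x z * ((∑ y ∈ V₀, hm z y * c y) - ∑ y ∈ V₀, hm x y * c y)
        = ∑ y ∈ V₀, R x z * (hm z y - hm x y) * c y := by
      intro z
      rw [← Finset.sum_sub_distrib, Finset.mul_sum]
      exact Finset.sum_congr rfl fun y _ => by ring
    simp only [hterm]
    rw [Finset.sum_comm]
    apply Finset.sum_eq_zero
    intro y _
    have h := hmh x hx y
    simp only [gen] at h
    calc ∑ z, R x z * (hm z y - hm x y) * c y
        = (∑ z, R x z * (hm z y - hm x y)) * c y := by rw [Finset.sum_mul]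
      _ = 0 := by rw [h, zero_mul]
  -- boundary values of hm-combinations
  have hbdry : ∀ (c : V → ℝ) (x : V), x ∈ V₀ →
      ∑ y ∈ V₀, hm x y * c y = c x := by
    intro c x hx
    have : ∀ y ∈ V₀, hm x y * c y = if x = y then c y else 0 := by
      intro y _
      rw [hm0 x hx y]
      split <;> simp
    rw [Finset.sum_congr rfl this, Finset.sum_ite_eq V₀ x c, if_pos hx]
  -- u equals the hm-combination of g
  have hu_eq : ∀ z, u z = ∑ y ∈ V₀, hm z y * g y := by
    intro z
    have hz := stmt5_harmonic_zero R hR hirr V₀ hV₀ne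
      (fun z => u z - ∑ y ∈ V₀, hm z y * g y)
      (fun x hx => by rw [gen_sub, huh x hx, hcomb g x hx, sub_zero])
      (fun x hx => by
        show u x - ∑ y ∈ V₀, hm x y * g y = 0
        rw [hu0 x hx, hbdry g x hx, sub_self]) z
    linarith [hz]
  -- hm rows sum to one
  have hw1 : ∀ z, ∑ y ∈ V₀, hm z y = 1 := by
    intro z
    have hg1 : ∀ z, gen R (fun z => (∑ y ∈ V₀, hm z y) - 1) z
        = gen R (fun z => ∑ y ∈ V₀, hm z y * (1 : ℝ)) z := by
      intro z
      simp only [gen, mul_one]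
      exact Finset.sum_congr rfl fun y _ => by ring
    have hz := stmt5_harmonic_zero R hR hirr V₀ hV₀ne
      (fun z => (∑ y ∈ V₀, hm z y) - 1)
      (fun x hx => by rw [hg1, hcomb (fun _ => (1:ℝ)) x hx])
      (fun x hx => by
        have := hbdry (fun _ => (1:ℝ)) x hx
        show (∑ y ∈ V₀, hm x y) - 1 = 0
        simp only [mul_one] at this
        rw [this, sub_self]) z
    linarith [hz]
  -- the key pointwise identity on V₀
  have key : ∀ x ∈ V₀, gen R u x = genOn V₀ RV₀ g x := by
    intro x hx
    have hux : u x = g x := hu0 x hx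
    have hsplit : gen R u x = (∑ z ∈ V₀, R x z * (u z - u x))
        + ∑ z ∈ V₀ᶜ, R x z * (u z - u x) := by
      rw [gen, Finset.sum_add_sum_compl]
    have h1 : ∑ z ∈ V₀, R x z * (u z - u x) = ∑ z ∈ V₀, R x z * (g z - g x) := by
      refine Finset.sum_congr rfl fun z hz => ?_
      rw [hu0 z hz, hux]
    have h2 : ∑ z ∈ V₀ᶜ, R x z * (u z - u x)
        = ∑ y ∈ V₀, (∑ z ∈ V₀ᶜ, R x z * hm z y) * (g y - g x) := by
      have hterm : ∀ z ∈ V₀ᶜ, R x z * (u z - u x)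
          = ∑ y ∈ V₀, R x z * hm z y * (g y - g x) := by
        intro z _
        rw [hu_eq z, hux]
        have : (∑ y ∈ V₀, hm z y * g y) - g x
            = ∑ y ∈ V₀, hm z y * (g y - g x) := by
          nth_rewrite 1 [show g x = ∑ y ∈ V₀, hm z y * g x by
            rw [← Finset.sum_mul, hw1 z, one_mul]]
          rw [← Finset.sum_sub_distrib]
          exact Finset.sum_congr rfl fun y _ => by ring
        rw [this, Finset.mul_sum]
        exact Finset.sum_congr rfl fun y _ => by ring
      rw [Finset.sum_congr rfl hterm, Finset.sum_comm]
      exact Finset.sum_congr rfl fun y _ => by rw [Finset.sum_mul]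
    have hgenOn : genOn V₀ RV₀ g x
        = ∑ y ∈ V₀, (R x y + ∑ z ∈ V₀ᶜ, R x z * hm z y) * (g y - g x) := by
      refine Finset.sum_congr rfl fun y hy => ?_
      rcases eq_or_ne x y with h | h
      · subst h; simp [sub_self]
      · rw [hRV₀ x hx y hy h]
    rw [hsplit, h1, h2, hgenOn, ← Finset.sum_add_distrib]
    exact Finset.sum_congr rfl fun y _ => by ring
  -- conclude
  have hzero : ∀ x ∈ Finset.univ, x ∉ V₀ → μ x * (gen R u x / u x) = 0 := by
    intro x _ hx
    rw [huh x hx, zero_div, mul_zero]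
  rw [← Finset.sum_subset (Finset.subset_univ V₀) hzero]
  refine Finset.sum_congr rfl fun x hx => ?_
  rw [key x hx, hu0 x hx]
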